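/- arXiv:2501.05029 — 2 statements merged into one kernel-verified Lean document; each statement's English description precedes it below -/
import Mathlib

section
/- Let α be a real number with 0 ≤ α < 2/3, let s ≥ 1 be an integer and set n = ⌊5s/3⌋ + 2. If n ≥ 25, then λ_α(K_s ∨ (⌊2s/3⌋+2)K_1) < n − 2. -/
open SimpleGraph

/-- The `Aα`-matrix of a finite simple graph: `Aα(G) = α·D(G) + (1-α)·A(G)`. -/
noncomputable def aAlphaMatrix {V : Type*} [Finite V] (α : ℝ) (G : SimpleGraph V) :
    Matrix V V ℝ :=
  letI := Fintype.ofFinite V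
  letI := Classical.decEq V
  letI : DecidableRel G.Adj := Classical.decRel _
  α • Matrix.diagonal (fun v => (G.degree v : ℝ)) + (1 - α) • (G.adjMatrix ℝ)

/-- The `Aα`-spectral radius: the largest eigenvalue of `Aα(G)` (the supremum of its real
spectrum; all eigenvalues of this symmetric matrix are real). -/
noncomputable def lambdaAlpha {V : Type*} [Finite V] (α : ℝ) (G : SimpleGraph V) : ℝ :=
  letI := Fintype.ofFinite V
  letI := Classical.decEq V
  sSup (spectrum ℝ (aAlphaMatrix α G))

/-- The join `G ∨ H` of two graphs on disjoint vertex sets. -/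
def graphJoin {V W : Type*} (G : SimpleGraph V) (H : SimpleGraph W) : SimpleGraph (V ⊕ W) where
  Adj x y :=
    match x, y with
    | Sum.inl a, Sum.inl b => G.Adj a b
    | Sum.inr a, Sum.inr b => H.Adj a b
    | Sum.inl _, Sum.inr _ => True
    | Sum.inr _, Sum.inl _ => True
  symm := by
    constructor
    rintro (a | a) (b | b) h
    · exact G.adj_symm h
    · trivial
    · trivial
    · exact H.adj_symm h
  loopless := by
    constructor
    rintro (a | a) h
    · exact G.irrefl h
    · exact H.irrefl h

/-- `G` has an `H`-factor where `H` consists of the paths `P_k` for `k ∈ ks`: a spanning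
subgraph all of whose connected components are paths `P_k` with `k ∈ ks`. -/
def HasPathFactor {V : Type*} (G : SimpleGraph V) (ks : Set ℕ) : Prop :=
  ∃ F : SimpleGraph V, F ≤ G ∧
    ∀ c : F.ConnectedComponent, ∃ k ∈ ks, Nonempty ((F.induce c.supp) ≃g pathGraph k)

/-- `K_1 ∨ (K_{n-2} ∪ K_1)`. -/
def specialGraph (n : ℕ) : SimpleGraph (Fin 1 ⊕ (Fin (n - 2) ⊕ Fin 1)) :=
  graphJoin (⊤ : SimpleGraph (Fin 1))
    ((⊤ : SimpleGraph (Fin (n - 2))) ⊕g (⊤ : SimpleGraph (Fin 1)))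

lemma my_aAlphaMatrix_eq {V : Type*} [Fintype V] [DecidableEq V] (α : ℝ) (G : SimpleGraph V)
    [DecidableRel G.Adj] :
    aAlphaMatrix α G =
      α • Matrix.diagonal (fun v => (G.degree v : ℝ)) + (1 - α) • (G.adjMatrix ℝ) := by
  unfold aAlphaMatrix
  congr!

lemma my_lambdaAlpha_eq {V : Type*} [Fintype V] [DecidableEq V] (α : ℝ) (G : SimpleGraph V) :
    lambdaAlpha α G = sSup (spectrum ℝ (aAlphaMatrix α G)) := by
  unfold lambdaAlpha
  congr!

lemma my_weighted_gershgorin {n : Type*} [Fintype n] [DecidableEq n] (A : Matrix n n ℝ)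
    (w : n → ℝ) (hw : ∀ i, w i ≠ 0) {μ : ℝ} (hμ : μ ∈ spectrum ℝ A) :
    ∃ k, μ ≤ A k k + ∑ j ∈ Finset.univ.erase k, |(w k)⁻¹ * A k j * w j| := by
  have hinv : Matrix.diagonal w⁻¹ * Matrix.diagonal w = 1 := by
    rw [Matrix.diagonal_mul_diagonal]
    have : (fun i => w⁻¹ i * w i) = fun _ => (1:ℝ) := funext fun i => inv_mul_cancel₀ (hw i)
    rw [this]; exact Matrix.diagonal_one
  have hinv' : Matrix.diagonal w * Matrix.diagonal w⁻¹ = 1 := by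
    rw [Matrix.diagonal_mul_diagonal]
    have : (fun i => w i * w⁻¹ i) = fun _ => (1:ℝ) := funext fun i => mul_inv_cancel₀ (hw i)
    rw [this]; exact Matrix.diagonal_one
  set u : (Matrix n n ℝ)ˣ := ⟨Matrix.diagonal w, Matrix.diagonal w⁻¹, hinv', hinv⟩ with hu
  set B : Matrix n n ℝ := Matrix.diagonal w⁻¹ * A * Matrix.diagonal w with hB
  have hspec : μ ∈ spectrum ℝ B := by
    have : B = (u⁻¹ : (Matrix n n ℝ)ˣ) * A * u := rfl
    rw [this, spectrum.units_conjugate']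
    exact hμ
  have hev : Module.End.HasEigenvalue (Matrix.toLin' B) μ := by
    rw [Module.End.hasEigenvalue_iff_mem_spectrum]
    have : Matrix.toLin' B = Matrix.toLinAlgEquiv' B := rfl
    rw [this, AlgEquiv.spectrum_eq]
    exact hspec
  obtain ⟨k, hk⟩ := eigenvalue_mem_ball hev
  refine ⟨k, ?_⟩
  have hBkk : B k k = A k k := by
    simp only [hB, Matrix.mul_diagonal, Matrix.diagonal_mul, Pi.inv_apply]
    field_simp
    exact mul_div_cancel_left₀ _ (hw k)
  have hBkj : ∀ j, B k j = (w k)⁻¹ * A k j * w j := fun j => by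
    simp only [hB, Matrix.mul_diagonal, Matrix.diagonal_mul, Pi.inv_apply]
  rw [Metric.mem_closedBall, Real.dist_eq, hBkk] at hk
  have h1 : μ - A k k ≤ ∑ j ∈ Finset.univ.erase k, ‖B k j‖ :=
    le_trans (le_abs_self _) hk
  have h2 : ∑ j ∈ Finset.univ.erase k, ‖B k j‖
      = ∑ j ∈ Finset.univ.erase k, |(w k)⁻¹ * A k j * w j| := by
    refine Finset.sum_congr rfl fun j _ => ?_
    rw [hBkj j, Real.norm_eq_abs]
  linarith [h2 ▸ h1]

lemma my_sum_ite_eq_card {β : Type*} [Fintype β] [DecidableEq β] (a : β) (X Y : ℝ) :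
    ∑ b : β, (if a = b then X else Y) = X + ((Fintype.card β - 1 : ℕ) : ℝ) * Y := by
  rw [← Finset.add_sum_erase _ _ (Finset.mem_univ a), if_pos rfl]
  congr 1
  rw [Finset.sum_congr rfl (fun b hb => if_neg (fun he =>
    (Finset.mem_erase.mp hb).1 he.symm))]
  rw [Finset.sum_const, Finset.card_erase_of_mem (Finset.mem_univ _), Finset.card_univ,
    nsmul_eq_mul]

set_option maxHeartbeats 1000000 in
/-- For `0 ≤ α < 2/3` and an integer `s ≥ 1`, setting `n = ⌊5s/3⌋ + 2`, if `n ≥ 25` then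
`λ_α(K_s ∨ (⌊2s/3⌋+2)K_1) < n − 2`. -/
theorem lambdaAlpha_split_lt_case2 (α : ℝ) (hα0 : 0 ≤ α) (hα1 : α < 2 / 3)
    (s : ℕ) (hs : 1 ≤ s) (hn : 25 ≤ 5 * s / 3 + 2) :
    lambdaAlpha α (graphJoin (⊤ : SimpleGraph (Fin s))
        (⊥ : SimpleGraph (Fin (2 * s / 3 + 2)))) <
      ((5 * s / 3 + 2 : ℕ) : ℝ) - 2 := by
  have hs14 : 14 ≤ s := by omega
  set t := 2 * s / 3 + 2 with ht
  have ht11 : 11 ≤ t := by omega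
  have hnst : 5 * s / 3 + 2 = s + t := by omega
  set G := graphJoin (⊤ : SimpleGraph (Fin s)) (⊥ : SimpleGraph (Fin t)) with hG
  letI : DecidableRel G.Adj := Classical.decRel _
  -- degrees
  have hdeg1 : ∀ a : Fin s, G.degree (Sum.inl a) = s + t - 1 := by
    intro a
    have hnb : G.neighborFinset (Sum.inl a) = Finset.univ.erase (Sum.inl a) := by
      ext x
      rcases x with b | b <;>
        simp [SimpleGraph.mem_neighborFinset, hG, graphJoin, ne_comm, eq_comm]
    unfold SimpleGraph.degree
    rw [hnb, Finset.card_erase_of_mem (Finset.mem_univ _), Finset.card_univ]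
    simp [Fintype.card_sum]
  have hdeg2 : ∀ b : Fin t, G.degree (Sum.inr b) = s := by
    intro b
    have hnb : G.neighborFinset (Sum.inr b) = Finset.univ.image Sum.inl := by
      ext x
      rcases x with c | c <;> simp [SimpleGraph.mem_neighborFinset, hG, graphJoin]
    unfold SimpleGraph.degree
    rw [hnb, Finset.card_image_of_injective _ Sum.inl_injective, Finset.card_univ,
      Fintype.card_fin]
  set S := (s : ℝ) with hSdef
  set T := (t : ℝ) with hTdef
  have hS14 : (14:ℝ) ≤ S := by rw [hSdef]; exact_mod_cast hs14
  have hT11 : (11:ℝ) ≤ T := by rw [hTdef]; exact_mod_cast ht11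
  have hT0 : (0:ℝ) < T := by linarith
  have h1α : (0:ℝ) < 1 - α := by linarith
  set c : ℝ := 1 - 3 / T with hcdef
  have hc0 : (0:ℝ) < c := by
    have : 3 / T ≤ 3 / 11 := by apply div_le_div_of_nonneg_left <;> linarith
    rw [hcdef]; linarith
  have hTc : T * c = T - 3 := by
    rw [hcdef]; field_simp
  -- matrix entries
  have hcast1 : ((s + t - 1 : ℕ) : ℝ) = S + T - 1 := by
    have h1 : 1 ≤ s + t := by omega
    rw [Nat.cast_sub h1, Nat.cast_add, ← hSdef, ← hTdef, Nat.cast_one]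
  have hMll : ∀ a b : Fin s, aAlphaMatrix α G (Sum.inl a) (Sum.inl b)
      = if a = b then α * (S + T - 1) else (1 - α) := by
    intro a b
    rw [my_aAlphaMatrix_eq]
    simp only [Matrix.add_apply, Matrix.smul_apply, smul_eq_mul, SimpleGraph.adjMatrix_apply]
    by_cases hab : a = b
    · subst hab
      rw [Matrix.diagonal_apply_eq, hdeg1 a, hcast1, if_neg G.irrefl, if_pos rfl]
      ring
    · rw [Matrix.diagonal_apply_ne _ (fun h => hab (Sum.inl_injective h)),
        if_pos (show G.Adj (Sum.inl a) (Sum.inl b) from hab), if_neg hab]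
      ring
  have hMlr : ∀ (a : Fin s) (b : Fin t), aAlphaMatrix α G (Sum.inl a) (Sum.inr b) = 1 - α := by
    intro a b
    rw [my_aAlphaMatrix_eq]
    simp only [Matrix.add_apply, Matrix.smul_apply, smul_eq_mul, SimpleGraph.adjMatrix_apply]
    rw [Matrix.diagonal_apply_ne _ (fun h => Sum.inl_ne_inr h),
      if_pos (show G.Adj (Sum.inl a) (Sum.inr b) from trivial)]
    ring
  have hMrl : ∀ (b : Fin t) (a : Fin s), aAlphaMatrix α G (Sum.inr b) (Sum.inl a) = 1 - α := by
    intro b a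
    rw [my_aAlphaMatrix_eq]
    simp only [Matrix.add_apply, Matrix.smul_apply, smul_eq_mul, SimpleGraph.adjMatrix_apply]
    rw [Matrix.diagonal_apply_ne _ (fun h => Sum.inr_ne_inl h),
      if_pos (show G.Adj (Sum.inr b) (Sum.inl a) from trivial)]
    ring
  have hMrr : ∀ b b' : Fin t, aAlphaMatrix α G (Sum.inr b) (Sum.inr b')
      = if b = b' then α * S else 0 := by
    intro b b'
    rw [my_aAlphaMatrix_eq]
    simp only [Matrix.add_apply, Matrix.smul_apply, smul_eq_mul, SimpleGraph.adjMatrix_apply]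
    by_cases hbb : b = b'
    · subst hbb
      rw [Matrix.diagonal_apply_eq, hdeg2 b, ← hSdef, if_neg G.irrefl, if_pos rfl]
      ring
    · rw [Matrix.diagonal_apply_ne _ (fun h => hbb (Sum.inr_injective h)),
        if_neg (show ¬ G.Adj (Sum.inr b) (Sum.inr b') from fun h => h), if_neg hbb]
      ring
  -- weights
  set w : Fin s ⊕ Fin t → ℝ := Sum.elim (fun _ => 1) (fun _ => c) with hwdef
  have hw : ∀ i, w i ≠ 0 := by
    rintro (a | a) <;> simp [hwdef]
    exact ne_of_gt hc0
  -- numeric bounds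
  have key : 3 * S < (T - 2) * (T - 3) := by
    have hq2 : 2 * s ≤ 3 * (2 * s / 3) + 2 := by omega
    have hq9 : 9 ≤ 2 * s / 3 := by omega
    set Q : ℝ := ((2 * s / 3 : ℕ) : ℝ) with hQdef
    have hQ9 : (9:ℝ) ≤ Q := by rw [hQdef]; exact_mod_cast hq9
    have h2s : 2 * S ≤ 3 * Q + 2 := by
      rw [hSdef, hQdef]; exact_mod_cast hq2
    have hTQ : T = Q + 2 := by
      rw [hTdef, ht, Nat.cast_add, ← hQdef]; norm_num
    rw [hTQ]
    nlinarith [mul_nonneg (by linarith : (0:ℝ) ≤ Q - 9) (by linarith : (0:ℝ) ≤ Q)]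
  set R1 : ℝ := α * (S + T - 1) + ((S - 1) * (1 - α) + T * ((1 - α) * c)) with hR1def
  set R2 : ℝ := α * S + S * ((1 - α) / c) with hR2def
  have hR1 : R1 < S + T - 2 := by
    have h5 : T * ((1 - α) * c) = (1 - α) * (T - 3) := by
      rw [mul_left_comm, hTc]
    rw [hR1def, h5]
    have hid : α * (S + T - 1) + ((S - 1) * (1 - α) + (1 - α) * (T - 3))
        = S + T - 4 + 3 * α := by ring
    rw [hid]; linarith
  have hR2 : R2 < S + T - 2 := by
    rw [hR2def]
    have hSc : S * ((1 - α) / c) < S + T - 2 - α * S := by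
      rw [← mul_div_assoc, div_lt_iff₀ hc0]
      have hceq : c = (T - 3) / T := by rw [hcdef]; field_simp
      rw [hceq]
      rw [mul_comm (S + T - 2 - α * S) ((T - 3) / T), div_mul_eq_mul_div, lt_div_iff₀ hT0]
      nlinarith [key, mul_nonneg hα0 (by linarith : (0:ℝ) ≤ S)]
    linarith
  have hS0 : (0:ℝ) ≤ S := by linarith
  have hR2nn : 0 ≤ R2 := by
    rw [hR2def]
    exact add_nonneg (mul_nonneg hα0 hS0)
      (mul_nonneg hS0 (div_nonneg h1α.le hc0.le))
  -- spectrum bound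
  have hbound : ∀ μ ∈ spectrum ℝ (aAlphaMatrix α G), μ ≤ max R1 R2 := by
    intro μ hμ
    obtain ⟨k, hk⟩ := my_weighted_gershgorin _ w hw hμ
    rcases k with a | b
    · refine le_trans (le_trans hk (le_of_eq ?_)) (le_max_left _ _)
      rw [hR1def]
      have hdiag : aAlphaMatrix α G (Sum.inl a) (Sum.inl a) = α * (S + T - 1) := by
        rw [hMll]; simp
      rw [hdiag]
      congr 1
      rw [Finset.sum_erase_eq_sub (Finset.mem_univ _), Fintype.sum_sum_type]
      have e1 : ∀ b : Fin s, |(w (Sum.inl a))⁻¹ * aAlphaMatrix α G (Sum.inl a) (Sum.inl b)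
          * w (Sum.inl b)| = if a = b then α * (S + T - 1) else (1 - α) := by
        intro b
        simp only [hwdef, Sum.elim_inl, inv_one, one_mul, mul_one, hMll]
        split_ifs
        · rw [abs_of_nonneg (by nlinarith)]
        · rw [abs_of_nonneg h1α.le]
      have e2 : ∀ b : Fin t, |(w (Sum.inl a))⁻¹ * aAlphaMatrix α G (Sum.inl a) (Sum.inr b)
          * w (Sum.inr b)| = (1 - α) * c := by
        intro b
        simp only [hwdef, Sum.elim_inl, Sum.elim_inr, inv_one, one_mul, hMlr]
        rw [abs_of_nonneg (mul_nonneg h1α.le hc0.le)]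
      have e3 : |(w (Sum.inl a))⁻¹ * aAlphaMatrix α G (Sum.inl a) (Sum.inl a)
          * w (Sum.inl a)| = α * (S + T - 1) := by
        rw [e1 a, if_pos rfl]
      rw [e3]
      rw [Finset.sum_congr rfl (fun b _ => e1 b), Finset.sum_congr rfl (fun b _ => e2 b)]
      rw [my_sum_ite_eq_card, Finset.sum_const, Finset.card_univ, Fintype.card_fin,
        Fintype.card_fin, nsmul_eq_mul]
      have hcast2 : ((s - 1 : ℕ) : ℝ) = S - 1 := by
        rw [Nat.cast_sub hs, ← hSdef, Nat.cast_one]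
      rw [hcast2]
      ring
    · refine le_trans (le_trans hk (le_of_eq ?_)) (le_max_right _ _)
      rw [hR2def]
      have hdiag : aAlphaMatrix α G (Sum.inr b) (Sum.inr b) = α * S := by
        rw [hMrr]; simp
      rw [hdiag]
      rw [Finset.sum_erase_eq_sub (Finset.mem_univ _), Fintype.sum_sum_type]
      have e1 : ∀ a : Fin s, |(w (Sum.inr b))⁻¹ * aAlphaMatrix α G (Sum.inr b) (Sum.inl a)
          * w (Sum.inl a)| = (1 - α) / c := by
        intro a
        simp only [hwdef, Sum.elim_inl, Sum.elim_inr, mul_one, hMrl]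
        rw [abs_of_nonneg (mul_nonneg (inv_nonneg.mpr hc0.le) h1α.le)]
        rw [inv_mul_eq_div]
      have e2 : ∀ b' : Fin t, |(w (Sum.inr b))⁻¹ * aAlphaMatrix α G (Sum.inr b) (Sum.inr b')
          * w (Sum.inr b')| = if b = b' then α * S else 0 := by
        intro b'
        simp only [hwdef, Sum.elim_inr, hMrr]
        split_ifs
        · rw [mul_comm (c⁻¹) (α * S), mul_assoc, inv_mul_cancel₀ (ne_of_gt hc0)]
          rw [mul_one, abs_of_nonneg (mul_nonneg hα0 (by linarith : (0:ℝ) ≤ S))]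
        · simp
      have e3 : |(w (Sum.inr b))⁻¹ * aAlphaMatrix α G (Sum.inr b) (Sum.inr b)
          * w (Sum.inr b)| = α * S := by
        rw [e2 b, if_pos rfl]
      rw [e3]
      rw [Finset.sum_congr rfl (fun a _ => e1 a), Finset.sum_congr rfl (fun b' _ => e2 b')]
      rw [Finset.sum_const, Finset.card_univ, Fintype.card_fin, nsmul_eq_mul]
      rw [Finset.sum_ite_eq Finset.univ b (fun _ => α * S), if_pos (Finset.mem_univ b)]
      ring
  have htgt : ((5 * s / 3 + 2 : ℕ) : ℝ) - 2 = S + T - 2 := by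
    rw [hnst, Nat.cast_add, ← hSdef, ← hTdef]
  rw [htgt, my_lambdaAlpha_eq]
  calc sSup (spectrum ℝ (aAlphaMatrix α G)) ≤ max R1 R2 :=
        Real.sSup_le hbound (le_max_of_le_right hR2nn)
    _ < S + T - 2 := max_lt hR1 hR2
end

section
/- Let α be a real number with 0 ≤ α < 2/3, let s ≥ 1 be an integer and set n = ⌊5s/3⌋ + 1. If n ≥ 25, then λ_α(K_s ∨ (⌊2s/3⌋+1)K_1) < n − 2. -/
open SimpleGraph

lemma eigen_bound {V : Type*} [Fintype V] [DecidableEq V] (A : Matrix V V ℝ)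
    (hA : ∀ i j, 0 ≤ A i j) (w : V → ℝ) (hw : ∀ i, 0 < w i) (b : ℝ)
    (hrow : ∀ i, ∑ j, A i j * w j < b * w i) :
    ∀ μ ∈ spectrum ℝ A, μ < b := by
  intro μ hμ
  rw [spectrum.mem_iff] at hμ
  have hdet : ((μ • (1 : Matrix V V ℝ)) - A).det = 0 := by
    by_contra h
    exact hμ (by
      rw [Matrix.isUnit_iff_isUnit_det]
      simpa [Algebra.algebraMap_eq_smul_one] using isUnit_iff_ne_zero.mpr h)
  obtain ⟨v, hv0, hv⟩ := Matrix.exists_mulVec_eq_zero_iff.mpr hdet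
  have hAv : ∀ i, ∑ j, A i j * v j = μ * v i := by
    intro i
    have h2 : μ • v = A.mulVec v := by
      have h := hv
      rwa [Matrix.sub_mulVec, Matrix.smul_mulVec, Matrix.one_mulVec,
        sub_eq_zero] at h
    have h3 := congrFun h2 i
    simp only [Pi.smul_apply, smul_eq_mul, Matrix.mulVec, dotProduct] at h3
    rw [h3]
  have hne : Nonempty V := by
    by_contra h
    exact hv0 (funext fun j => ((not_nonempty_iff.mp h).false j).elim)
  obtain ⟨i, -, hi⟩ := Finset.exists_max_image Finset.univ (fun j => |v j| / w j)
    Finset.univ_nonempty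
  have hvi : 0 < |v i| := by
    obtain ⟨j, hj⟩ := Function.ne_iff.mp hv0
    have h1 := hi j (Finset.mem_univ j)
    have hj' : 0 < |v j| / w j := div_pos (abs_pos.mpr hj) (hw j)
    have h2 : 0 < |v i| / w i := lt_of_lt_of_le hj' h1
    have h3 := mul_pos h2 (hw i)
    rwa [div_mul_cancel₀ _ (hw i).ne'] at h3
  have key : μ * |v i| < b * |v i| := by
    calc μ * |v i| ≤ |μ * v i| := by
          rw [abs_mul]; exact mul_le_mul_of_nonneg_right (le_abs_self μ) (abs_nonneg _)
    _ = |∑ j, A i j * v j| := by rw [hAv i]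
    _ ≤ ∑ j, A i j * |v j| := by
        refine (Finset.abs_sum_le_sum_abs _ _).trans (le_of_eq ?_)
        exact Finset.sum_congr rfl fun j _ => by rw [abs_mul, abs_of_nonneg (hA i j)]
    _ ≤ ∑ j, A i j * (w j * (|v i| / w i)) := by
        refine Finset.sum_le_sum fun j _ => mul_le_mul_of_nonneg_left ?_ (hA i j)
        have h1 := hi j (Finset.mem_univ j)
        calc |v j| = (|v j| / w j) * w j := by rw [div_mul_cancel₀ _ (hw j).ne']
        _ ≤ (|v i| / w i) * w j := mul_le_mul_of_nonneg_right h1 (hw j).le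
        _ = w j * (|v i| / w i) := mul_comm _ _
    _ = (∑ j, A i j * w j) * (|v i| / w i) := by
        rw [Finset.sum_mul]; exact Finset.sum_congr rfl fun j _ => (mul_assoc _ _ _).symm
    _ < (b * w i) * (|v i| / w i) := mul_lt_mul_of_pos_right (hrow i) (div_pos hvi (hw i))
    _ = b * |v i| := by field_simp [(hw i).ne']
  exact lt_of_mul_lt_mul_right key (abs_nonneg _)

lemma pick_udelta (p q r m : ℝ) (hp : 0 < p) (hq : 0 < q) (hr : 0 < r) (hm : 0 < m)
    (key : p*r < q*m) :
    ∃ u δ : ℝ, 0 < u ∧ 0 < δ ∧ 2*δ ≤ m ∧ δ*u < q*u - p ∧ δ < m - r*u := by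
  refine ⟨(p*r + q*m)/(2*q*r), ?_⟩
  set u : ℝ := (p*r + q*m)/(2*q*r) with hu
  have hupos : 0 < u := by positivity
  have e1 : q*u = (p*r+q*m)/(2*r) := by rw [hu]; field_simp
  have e2 : r*u = (p*r+q*m)/(2*q) := by rw [hu]; field_simp
  have h1 : p < q*u := by rw [e1, lt_div_iff₀ (by positivity)]; nlinarith
  have h2 : r*u < m := by rw [e2, div_lt_iff₀ (by positivity)]; nlinarith
  have hru : 0 < r*u := mul_pos hr hupos
  refine ⟨min ((q*u-p)/(2*u)) ((m-r*u)/2), hupos, ?_, ?_, ?_, ?_⟩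
  · exact lt_min (div_pos (by linarith) (by positivity)) (by linarith)
  · have h3 := min_le_right ((q*u-p)/(2*u)) ((m-r*u)/2)
    linarith
  · have h3 := min_le_left ((q*u-p)/(2*u)) ((m-r*u)/2)
    have h4 : (q*u-p)/(2*u)*u = (q*u-p)/2 := by field_simp
    nlinarith [mul_le_mul_of_nonneg_right h3 hupos.le]
  · have h3 := min_le_right ((q*u-p)/(2*u)) ((m-r*u)/2)
    linarith

lemma real_key (α S T : ℝ) (hα0 : 0 ≤ α) (hβ : 1/3 < 1 - α) (hS : 15 ≤ S) (hT : 11 ≤ T)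
    (h3T : 2*S+1 ≤ 3*T) :
    ∃ u δ : ℝ, 0 < u ∧ 0 < δ ∧ δ ≤ (S+T-2)/2 ∧
      α*(S-1+T)*u + (1-α)*((S-1)*u + T) < (S+T-2-δ)*u ∧
      α*S + (1-α)*(S*u) < S+T-2-δ := by
  have hqpos : 0 < T - 1 - α*T := by nlinarith
  have hrpos : 0 < (1-α)*S := by nlinarith
  have hppos : 0 < (1-α)*T := by nlinarith
  have hmpos : 0 < (S+T-2) - α*S := by nlinarith
  have hX : 3*(T-2) ≤ T^2 - 2*T - S := by nlinarith [sq_nonneg (T - 11)]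
  have hXpos : 0 < T^2 - 2*T - S := by nlinarith
  have hkey0 : T - 2 < (1-α) * (T^2 - 2*T - S) := by nlinarith
  have key : ((1-α)*T) * ((1-α)*S) < (T - 1 - α*T) * ((S+T-2) - α*S) := by nlinarith
  obtain ⟨u, δ, hu, hδ, hδm, hA, hB⟩ :=
    pick_udelta ((1-α)*T) (T - 1 - α*T) ((1-α)*S) ((S+T-2) - α*S) hppos hqpos hrpos hmpos key
  refine ⟨u, δ, hu, hδ, by nlinarith, by nlinarith, by nlinarith⟩


lemma sum_univ_inst {a b M : Type*} [Fintype a] [Fintype b] [AddCommMonoid M]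
    (I : Fintype (a ⊕ b)) (f : a ⊕ b → M) :
    ∑ x ∈ @Finset.univ _ I, f x = ∑ x : a, f (Sum.inl x) + ∑ y : b, f (Sum.inr y) := by
  rw [Subsingleton.elim I (instFintypeSum a b)]
  exact Fintype.sum_sum_type f

lemma sum_ite_ne {k : ℕ} (a : Fin k) (c : ℝ) :
    ∑ b : Fin k, (if a = b then (0:ℝ) else c) = ((k:ℝ) - 1) * c := by
  have : ∀ b : Fin k, (if a = b then (0:ℝ) else c) = c - (if a = b then c else 0) := by
    intro b; split <;> ring
  rw [Finset.sum_congr rfl fun b _ => this b, Finset.sum_sub_distrib,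
    Finset.sum_const, Finset.sum_ite_eq Finset.univ a (fun _ => c), if_pos (Finset.mem_univ a)]
  simp [Finset.card_univ]
  ring


@[simp] lemma graphJoin_adj_ll {V W : Type*} (G : SimpleGraph V) (H : SimpleGraph W)
    (a b : V) : (graphJoin G H).Adj (Sum.inl a) (Sum.inl b) ↔ G.Adj a b := Iff.rfl
@[simp] lemma graphJoin_adj_lr {V W : Type*} (G : SimpleGraph V) (H : SimpleGraph W)
    (a : V) (b : W) : (graphJoin G H).Adj (Sum.inl a) (Sum.inr b) := trivial
@[simp] lemma graphJoin_adj_rl {V W : Type*} (G : SimpleGraph V) (H : SimpleGraph W)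
    (a : W) (b : V) : (graphJoin G H).Adj (Sum.inr a) (Sum.inl b) := trivial
@[simp] lemma graphJoin_adj_rr {V W : Type*} (G : SimpleGraph V) (H : SimpleGraph W)
    (a b : W) : (graphJoin G H).Adj (Sum.inr a) (Sum.inr b) ↔ H.Adj a b := Iff.rfl

/-- For `0 ≤ α < 2/3` and an integer `s ≥ 1`, setting `n = ⌊5s/3⌋ + 1`, if `n ≥ 25` then
`λ_α(K_s ∨ (⌊2s/3⌋+1)K_1) < n − 2`. -/
theorem lambdaAlpha_split_lt_case3 (α : ℝ) (hα0 : 0 ≤ α) (hα1 : α < 2 / 3)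
    (s : ℕ) (hs : 1 ≤ s) (hn : 25 ≤ 5 * s / 3 + 1) :
    lambdaAlpha α (graphJoin (⊤ : SimpleGraph (Fin s))
        (⊥ : SimpleGraph (Fin (2 * s / 3 + 1)))) <
      ((5 * s / 3 + 1 : ℕ) : ℝ) - 2 := by
  have hs15 : 15 ≤ s := by omega
  set t : ℕ := 2*s/3+1 with ht
  have htn : 5*s/3+1 = s + t := by omega
  have ht11 : 11 ≤ t := by omega
  have h3t1 : 2*s+1 ≤ 3*t := by omega
  rw [htn]
  have hS15 : (15:ℝ) ≤ (s:ℝ) := by exact_mod_cast hs15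
  have hT11 : (11:ℝ) ≤ (t:ℝ) := by exact_mod_cast ht11
  have h3T : 2*(s:ℝ)+1 ≤ 3*(t:ℝ) := by exact_mod_cast h3t1
  have hβ : 1/3 < 1 - α := by linarith
  have h1α : 0 ≤ 1 - α := by linarith
  obtain ⟨u, δ, hu, hδ, hδb, hrow1, hrow2⟩ := real_key α (s:ℝ) (t:ℝ) hα0 hβ hS15 hT11 h3T
  have hcast : ((s + t : ℕ):ℝ) - 2 = (s:ℝ) + (t:ℝ) - 2 := by push_cast; ring
  rw [hcast]
  set G := graphJoin (⊤ : SimpleGraph (Fin s)) (⊥ : SimpleGraph (Fin t)) with hG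
  haveI : DecidableRel G.Adj := Classical.decRel _
  have adj_ll : ∀ (a b : Fin s), G.Adj (Sum.inl a) (Sum.inl b) ↔ a ≠ b := by
    intro a b; rw [hG]; simp
  have adj_lr : ∀ (a : Fin s) (c : Fin t), G.Adj (Sum.inl a) (Sum.inr c) := by
    intro a c; rw [hG]; simp
  have adj_rl : ∀ (c : Fin t) (a : Fin s), G.Adj (Sum.inr c) (Sum.inl a) := by
    intro c a; rw [hG]; simp
  have adj_rr : ∀ (c c' : Fin t), ¬ G.Adj (Sum.inr c) (Sum.inr c') := by
    intro c c'; rw [hG]; simp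
  set D : (Fin s ⊕ Fin t) → ℝ :=
    Sum.elim (fun _ => (s:ℝ) - 1 + (t:ℝ)) (fun _ => (s:ℝ)) with hD
  unfold lambdaAlpha
  have hMfun : ∀ i j, aAlphaMatrix α G i j
      = α * (if i = j then D i else 0) + (1-α) * (if G.Adj i j then 1 else 0) := by
    intro i j
    unfold aAlphaMatrix
    simp only [Matrix.add_apply, Matrix.smul_apply, Matrix.diagonal_apply, smul_eq_mul,
      SimpleGraph.adjMatrix_apply]
    congr 2
    · by_cases h : i = j
      · rw [if_pos h, if_pos h]
        subst h
        have hdeg := @SimpleGraph.degree_eq_sum_if_adj (Fin s ⊕ Fin t) (Fintype.ofFinite _) G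
          (Classical.decRel _) ℝ _ i
        rw [hdeg, sum_univ_inst]
        cases i with
        | inl a =>
          simp only [hD, Sum.elim_inl, adj_ll, adj_lr, ite_not, if_true]
          rw [sum_ite_ne a 1]
          simp only [Finset.sum_const, Finset.card_univ, Fintype.card_fin, nsmul_eq_mul,
            mul_one]
        | inr c =>
          simp only [hD, Sum.elim_inr, adj_rl, adj_rr, if_true, if_false]
          simp only [Finset.sum_const, Finset.card_univ, Fintype.card_fin, nsmul_eq_mul,
            mul_one, Finset.sum_const_zero, add_zero]
          ring
      · rw [if_neg h, if_neg h]
    · by_cases h : G.Adj i j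
      · rw [if_pos h, if_pos h]
      · rw [if_neg h, if_neg h]
  set w : (Fin s ⊕ Fin t) → ℝ := Sum.elim (fun _ => u) (fun _ => 1) with hwdef
  have hw : ∀ i, 0 < w i := by
    rintro (a | c)
    · simpa [hwdef] using hu
    · simp [hwdef]
  have hA : ∀ i j, 0 ≤ aAlphaMatrix α G i j := by
    intro i j
    rw [hMfun]
    have hdi : (0:ℝ) ≤ D i := by
      rcases i with a | c <;> simp only [hD, Sum.elim_inl, Sum.elim_inr] <;> linarith
    refine add_nonneg (mul_nonneg hα0 ?_) (mul_nonneg h1α ?_)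
    · split
      · exact hdi
      · exact le_refl 0
    · split
      · norm_num
      · exact le_refl 0
  have hrow : ∀ i, ∑ j ∈ @Finset.univ _ (Fintype.ofFinite (Fin s ⊕ Fin t)),
      aAlphaMatrix α G i j * w j < ((s:ℝ) + (t:ℝ) - 2 - δ) * w i := by
    intro i
    rw [sum_univ_inst]
    rcases i with a | c
    · have e1 : ∀ b : Fin s, aAlphaMatrix α G (Sum.inl a) (Sum.inl b) * w (Sum.inl b)
          = (1-α)*u + (if a = b then α*((s:ℝ)-1+(t:ℝ))*u - (1-α)*u else 0) := by
        intro b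
        rw [hMfun]
        by_cases hab : a = b
        · rw [if_pos (by rw [hab]), if_neg (by simp [adj_ll, hab]), if_pos hab]
          simp only [hwdef, Sum.elim_inl, hD]
          ring
        · rw [if_neg (by simp [hab]), if_pos ((adj_ll a b).mpr hab), if_neg hab]
          simp only [hwdef, Sum.elim_inl]
          ring
      have e2 : ∀ c : Fin t, aAlphaMatrix α G (Sum.inl a) (Sum.inr c) * w (Sum.inr c)
          = (1-α) := by
        intro c
        rw [hMfun, if_neg (by simp), if_pos (adj_lr a c)]
        simp [hwdef]
      rw [Finset.sum_congr rfl fun b _ => e1 b, Finset.sum_congr rfl fun c _ => e2 c,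
        Finset.sum_add_distrib, Finset.sum_const, Finset.sum_const, Finset.card_univ,
        Finset.card_univ, Finset.sum_ite_eq Finset.univ a
          (fun _ => α*((s:ℝ)-1+(t:ℝ))*u - (1-α)*u), if_pos (Finset.mem_univ a)]
      simp only [Fintype.card_fin, nsmul_eq_mul, hwdef, Sum.elim_inl]
      nlinarith [hrow1]
    · have e1 : ∀ b : Fin s, aAlphaMatrix α G (Sum.inr c) (Sum.inl b) * w (Sum.inl b)
          = (1-α) * u := by
        intro b
        rw [hMfun, if_neg (by simp), if_pos (adj_rl c b)]
        simp [hwdef]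
      have e2 : ∀ c' : Fin t, aAlphaMatrix α G (Sum.inr c) (Sum.inr c') * w (Sum.inr c')
          = (if c = c' then α * (s:ℝ) else 0) := by
        intro c'
        rw [hMfun, if_neg (adj_rr c c')]
        by_cases hcc : c = c'
        · rw [if_pos (by rw [hcc]), if_pos hcc]
          simp only [hwdef, Sum.elim_inr, hD]
          ring
        · rw [if_neg (by simp [hcc]), if_neg hcc]
          simp
      rw [Finset.sum_congr rfl fun b _ => e1 b, Finset.sum_congr rfl fun c' _ => e2 c',
        Finset.sum_const, Finset.card_univ,
        Finset.sum_ite_eq Finset.univ c (fun _ => α * (s:ℝ)), if_pos (Finset.mem_univ c)]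
      simp only [Fintype.card_fin, nsmul_eq_mul, hwdef, Sum.elim_inr, mul_one]
      nlinarith [hrow2]
  have hbnd := @eigen_bound _ (Fintype.ofFinite _) (Classical.decEq _) (aAlphaMatrix α G) hA w hw ((s:ℝ) + (t:ℝ) - 2 - δ) hrow
  have h0 : (0:ℝ) ≤ (s:ℝ) + (t:ℝ) - 2 - δ := by linarith
  refine lt_of_le_of_lt (Real.sSup_le (fun x hx => (hbnd x hx).le) h0) ?_
  linarith
end
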